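/- The function F is strictly increasing on ℝ. -/

import Mathlib

open Real Filter MeasureTheory

noncomputable def F : ℝ → ℝ := fun x =>
  if x = 0 then 1/2 else Real.exp x / (Real.exp x - 1) - 1/x

lemma sinh_lt_mul_cosh {t : ℝ} (ht : 0 < t) : Real.sinh t < t * Real.cosh t := by
  have key : StrictMonoOn (fun s : ℝ => s * Real.cosh s - Real.sinh s) (Set.Ici 0) := by
    apply strictMonoOn_of_deriv_pos (convex_Ici 0)
    · exact (continuous_id.mul Real.continuous_cosh).sub Real.continuous_sinh |>.continuousOn
    · intro x hx
      rw [interior_Ici] at hx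
      have h1 := (hasDerivAt_id x).mul (Real.hasDerivAt_cosh x)
      have h2 := h1.sub (Real.hasDerivAt_sinh x)
      simp only [id_eq] at h2
      rw [show (fun s : ℝ => s * Real.cosh s - Real.sinh s) = id * Real.cosh - Real.sinh from rfl, h2.deriv]
      have hs := Real.sinh_pos_iff.2 hx
      nlinarith [mul_pos (Set.mem_Ioi.1 hx) hs]
  have := key (Set.self_mem_Ici) (Set.mem_Ici.2 ht.le) ht
  simpa using this

lemma ineq1 {t : ℝ} (ht : 0 < t) : 0 < (t - 2) * Real.exp t + t + 2 := by
  have h := sinh_lt_mul_cosh (by linarith : (0:ℝ) < t / 2)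
  rw [Real.sinh_eq, Real.cosh_eq] at h
  have ha : 0 < Real.exp (t / 2) := Real.exp_pos _
  have hb : 0 < Real.exp (-(t / 2)) := Real.exp_pos _
  have hab : Real.exp (t / 2) * Real.exp (-(t / 2)) = 1 := by
    rw [← Real.exp_add]; simp
  have ht2 : Real.exp (t / 2) * Real.exp (t / 2) = Real.exp t := by
    rw [← Real.exp_add]; ring_nf
  nlinarith [mul_pos ha ha, mul_pos ha hb]

lemma key3 {x : ℝ} (hx : x ≠ 0) : x ^ 2 * Real.exp x < (Real.exp x - 1) ^ 2 := by
  have hfac : Real.exp x - 1 = Real.exp (x / 2) * (2 * Real.sinh (x / 2)) := by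
    rw [Real.sinh_eq]
    have h1 : Real.exp (x / 2) * Real.exp (x / 2) = Real.exp x := by
      rw [← Real.exp_add]; ring_nf
    have h2 : Real.exp (x / 2) * Real.exp (-(x / 2)) = 1 := by
      rw [← Real.exp_add]; simp
    linear_combination h2 - h1
  have ht2 : Real.exp (x / 2) * Real.exp (x / 2) = Real.exp x := by
    rw [← Real.exp_add]; ring_nf
  have hsq : (x / 2) ^ 2 < Real.sinh (x / 2) ^ 2 := by
    rcases lt_or_gt_of_ne hx with h | h
    · have : Real.sinh (x / 2) < x / 2 := Real.sinh_lt_self_iff.2 (by linarith)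
      nlinarith
    · have := Real.self_lt_sinh_iff.2 (by linarith : (0:ℝ) < x / 2)
      nlinarith
  rw [hfac]
  have ha : 0 < Real.exp (x / 2) := Real.exp_pos _
  nlinarith [mul_pos ha ha]

lemma F_hasDerivAt {x : ℝ} (hx : x ≠ 0) :
    HasDerivAt F (1 / x ^ 2 - Real.exp x / (Real.exp x - 1) ^ 2) x := by
  have hne : Real.exp x - 1 ≠ 0 := by
    rcases lt_or_gt_of_ne hx with h | h
    · have := Real.exp_lt_one_iff.2 h; linarith
    · linarith [Real.add_one_lt_exp hx]
  have h1 : HasDerivAt (fun y : ℝ => Real.exp y / (Real.exp y - 1))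
      ((Real.exp x * (Real.exp x - 1) - Real.exp x * Real.exp x) / (Real.exp x - 1) ^ 2) x :=
    (Real.hasDerivAt_exp x).div ((Real.hasDerivAt_exp x).sub_const 1) hne
  have h2 : HasDerivAt (fun y : ℝ => 1 / y) (-(1 / x ^ 2)) x := by
    simpa [one_div] using hasDerivAt_inv hx
  have h3 := h1.sub h2
  have heq : F =ᶠ[nhds x] fun y => Real.exp y / (Real.exp y - 1) - 1 / y := by
    filter_upwards [isOpen_compl_singleton.mem_nhds (by simpa using hx)] with y hy
    simp only [F, if_neg (by simpa using hy)]
  have h4 : HasDerivAt F ((Real.exp x * (Real.exp x - 1) - Real.exp x * Real.exp x) /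
      (Real.exp x - 1) ^ 2 - -(1 / x ^ 2)) x := h3.congr_of_eventuallyEq heq
  convert h4 using 1
  field_simp
  ring

lemma exp_sub_one_ne {x : ℝ} (hx : x ≠ 0) : Real.exp x - 1 ≠ 0 := by
  rcases lt_or_gt_of_ne hx with h | h
  · have := Real.exp_lt_one_iff.2 h; linarith
  · linarith [Real.add_one_lt_exp hx]

lemma F_deriv_pos {x : ℝ} (hx : x ≠ 0) :
    0 < 1 / x ^ 2 - Real.exp x / (Real.exp x - 1) ^ 2 := by
  have h := key3 hx
  have hx2 : 0 < x ^ 2 := by positivity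
  have hd : 0 < (Real.exp x - 1) ^ 2 := by
    have := exp_sub_one_ne hx; positivity
  rw [sub_pos, div_lt_div_iff₀ hd hx2]
  linarith

lemma F_lt_half {x : ℝ} (hx : x < 0) : F x < 1 / 2 := by
  have h := ineq1 (by linarith : (0:ℝ) < -x)
  have hex : 0 < Real.exp x := Real.exp_pos x
  have hab : Real.exp x * Real.exp (-x) = 1 := by rw [← Real.exp_add]; simp
  have hnum : (x - 2) * Real.exp x + x + 2 < 0 := by nlinarith [Real.exp_pos (-x)]
  have he1 : Real.exp x - 1 < 0 := by
    have := Real.exp_lt_one_iff.2 hx; linarith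
  rw [F, if_neg (ne_of_lt hx)]
  rw [div_sub_div _ _ (ne_of_lt he1) (ne_of_lt hx),
    div_lt_div_iff₀ (mul_pos_of_neg_of_neg he1 hx) (by norm_num : (0:ℝ) < 2)]
  nlinarith

lemma F_gt_half {x : ℝ} (hx : 0 < x) : 1 / 2 < F x := by
  have h := ineq1 hx
  have he1 : 0 < Real.exp x - 1 := by linarith [Real.add_one_lt_exp (ne_of_gt hx)]
  rw [F, if_neg (ne_of_gt hx)]
  rw [div_sub_div _ _ (ne_of_gt he1) (ne_of_gt hx), lt_div_iff₀ (mul_pos he1 hx)]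
  nlinarith

lemma F_mono_neg : StrictMonoOn F (Set.Iio 0) := by
  apply strictMonoOn_of_deriv_pos (convex_Iio 0)
  · intro x hx
    exact ((F_hasDerivAt (ne_of_lt hx)).differentiableAt.continuousAt).continuousWithinAt
  · intro x hx
    rw [interior_Iio] at hx
    rw [(F_hasDerivAt (ne_of_lt hx)).deriv]
    exact F_deriv_pos (ne_of_lt hx)

lemma F_mono_pos : StrictMonoOn F (Set.Ioi 0) := by
  apply strictMonoOn_of_deriv_pos (convex_Ioi 0)
  · intro x hx
    exact ((F_hasDerivAt (ne_of_gt hx)).differentiableAt.continuousAt).continuousWithinAt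
  · intro x hx
    rw [interior_Ioi] at hx
    rw [(F_hasDerivAt (ne_of_gt hx)).deriv]
    exact F_deriv_pos (ne_of_gt hx)

theorem F_strictMono : StrictMono F := by
  intro a b hab
  have hF0 : F 0 = 1 / 2 := by simp [F]
  rcases lt_trichotomy a 0 with ha | ha | ha
  · rcases lt_trichotomy b 0 with hb | hb | hb
    · exact F_mono_neg ha hb hab
    · rw [hb, hF0]; exact F_lt_half ha
    · calc F a < 1/2 := F_lt_half ha
        _ < F b := F_gt_half hb
  · rw [ha, hF0]
    exact F_gt_half (ha ▸ hab)
  · exact F_mono_pos ha (lt_trans ha hab) hab
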